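/- Let g : [0,∞) → ℝ be continuous and convex, A a positive bounded operator on a Hilbert space H, and η ∈ H a unit vector. Then g(⟨Aη, η⟩) ≤ ⟨g(A)η, η⟩. -/

import Mathlib

open scoped InnerProductSpace

/-- Supporting line for a convex function at an interior point `a + ε`. -/
lemma convex_support_line (g : ℝ → ℝ) (hg_conv : ConvexOn ℝ (Set.Ici (0:ℝ)) g)
    {a ε : ℝ} (ha : 0 ≤ a) (hε : 0 < ε) :
    ∃ c : ℝ, (∀ x ∈ Set.Ici (0:ℝ), g (a + ε) + c * (x - (a + ε)) ≤ g x) ∧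
      g (a + ε) - g a ≤ c * ε ∧ c * ε ≤ g (a + 2*ε) - g (a + ε) := by
  set b := a + ε with hb
  have hb0 : (0:ℝ) ≤ b := by positivity
  have hbmem : b ∈ Set.Ici (0:ℝ) := hb0
  set S : Set ℝ := (fun y => (g y - g b) / (y - b)) '' Set.Ioi b with hS
  have hne : S.Nonempty := ⟨(g (b+1) - g b)/((b+1) - b), ⟨b+1, by simp, rfl⟩⟩
  have hbdd : BddBelow S := by
    refine ⟨(g a - g b)/(a - b), ?_⟩
    rintro _ ⟨y, hy, rfl⟩
    exact hg_conv.secant_mono hbmem (by exact ha) (le_trans hb0 (le_of_lt hy))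
      (ne_of_lt (show a < b by rw [hb]; linarith)) (ne_of_gt hy)
      (by linarith [Set.mem_Ioi.mp hy])
  set c := sInf S with hc
  refine ⟨c, ?_, ?_, ?_⟩
  · intro x hx
    rcases lt_trichotomy x b with hxb | hxb | hxb
    · -- x < b : slope(x, b) ≤ c
      have hxc : (g x - g b) / (x - b) ≤ c := by
        apply le_csInf hne
        rintro _ ⟨y, hy, rfl⟩
        exact hg_conv.secant_mono hbmem hx (le_trans hb0 (le_of_lt hy))
          (ne_of_lt hxb) (ne_of_gt hy) (by linarith [Set.mem_Ioi.mp hy])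
      have hxb' : x - b < 0 := by linarith
      have := (div_le_iff_of_neg hxb').mp hxc
      linarith
    · simp [hxb]
    · -- b < x : c ≤ slope(b, x)
      have hcx : c ≤ (g x - g b) / (x - b) := csInf_le hbdd ⟨x, hxb, rfl⟩
      have hxb' : 0 < x - b := by linarith
      have := (le_div_iff₀ hxb').mp hcx
      linarith
  · -- slope(a, b) ≤ c
    have : (g a - g b)/(a - b) ≤ c := by
      apply le_csInf hne
      rintro _ ⟨y, hy, rfl⟩
      exact hg_conv.secant_mono hbmem ha (le_trans hb0 (le_of_lt hy))
        (ne_of_lt (show a < b by rw [hb]; linarith)) (ne_of_gt hy)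
        (by linarith [Set.mem_Ioi.mp hy])
    have hab : a - b = -ε := by rw [hb]; ring
    rw [hab] at this
    have := (div_le_iff_of_neg (by linarith : (-ε:ℝ) < 0)).mp this
    nlinarith
  · -- c ≤ slope(b, a + 2ε)
    have hmem : (g (a + 2*ε) - g b)/((a + 2*ε) - b) ∈ S :=
      ⟨a + 2*ε, by simp only [Set.mem_Ioi, hb]; linarith, rfl⟩
    have hcx : c ≤ (g (a + 2*ε) - g b)/((a + 2*ε) - b) := csInf_le hbdd hmem
    have hd : (a + 2*ε) - b = ε := by rw [hb]; ring
    rw [hd] at hcx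
    exact (le_div_iff₀ hε).mp hcx

theorem convex_trace_inequality {H : Type*} [NormedAddCommGroup H]
    [InnerProductSpace ℂ H] [CompleteSpace H]
    (g : ℝ → ℝ) (hg_cont : ContinuousOn g (Set.Ici (0:ℝ)))
    (hg_conv : ConvexOn ℝ (Set.Ici (0:ℝ)) g)
    (A : H →L[ℂ] H) (hA : 0 ≤ A)
    (η : H) (hη : ‖η‖ = 1) :
    g (RCLike.re ⟪A η, η⟫_ℂ) ≤ RCLike.re ⟪(cfc g A) η, η⟫_ℂ := by
  have hApos : A.IsPositive := (ContinuousLinearMap.nonneg_iff_isPositive A).mp hA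
  have hAsa : IsSelfAdjoint A := hApos.isSelfAdjoint
  set a : ℝ := RCLike.re ⟪A η, η⟫_ℂ with ha_def
  have ha0 : 0 ≤ a := hApos.re_inner_nonneg_left η
  have hspec : ∀ x ∈ spectrum ℝ A, (0:ℝ) ≤ x := fun x hx =>
    spectrum_nonneg_of_nonneg hA hx
  have hgspec : ContinuousOn g (spectrum ℝ A) := hg_cont.mono (fun x hx => hspec x hx)
  set L : ℝ := RCLike.re ⟪(cfc g A) η, η⟫_ℂ with hL_def
  -- key inequality for every ε > 0
  have key : ∀ ε : ℝ, 0 < ε → 2 * g (a + ε) - g (a + 2*ε) ≤ L := by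
    intro ε hε
    obtain ⟨c, hsupp, hc1, hc2⟩ := convex_support_line g hg_conv ha0 hε
    set b := a + ε with hb
    set d : ℝ := g b - c * b with hd
    have hfun : (fun x : ℝ => g b + c * (x - b)) = fun x : ℝ => (c * ·) x + d := by
      funext x; simp [hd]; ring
    have hcfc : cfc (fun x : ℝ => g b + c * (x - b)) A = c • A + d • (1 : H →L[ℂ] H) := by
      rw [hfun, cfc_add (a := A) (c * ·) (fun _ => d) (by fun_prop) (by fun_prop),
        cfc_const_mul_id c A, cfc_const d A, Algebra.algebraMap_eq_smul_one]
    have hle : c • A + d • (1 : H →L[ℂ] H) ≤ cfc g A := by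
      rw [← hcfc]
      exact cfc_mono (fun x hx => hsupp x (hspec x hx)) (by fun_prop) hgspec
    have hpos : (cfc g A - (c • A + d • (1 : H →L[ℂ] H))).IsPositive :=
      (ContinuousLinearMap.le_def _ _).mp hle
    have hinner := hpos.re_inner_nonneg_left η
    rw [ContinuousLinearMap.sub_apply, inner_sub_left, map_sub] at hinner
    have hηη : ⟪η, η⟫_ℂ = (1:ℂ) := by
      rw [inner_self_eq_norm_sq_to_K, hη]; norm_num
    have hXη : RCLike.re ⟪(c • A + d • (1 : H →L[ℂ] H)) η, η⟫_ℂ = c * a + d := by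
      rw [ContinuousLinearMap.add_apply, inner_add_left, map_add,
        ContinuousLinearMap.smul_apply, ContinuousLinearMap.smul_apply,
        ContinuousLinearMap.one_apply,
        RCLike.real_smul_eq_coe_smul (K := ℂ) c (A η),
        RCLike.real_smul_eq_coe_smul (K := ℂ) d η,
        inner_smul_real_left, inner_smul_real_left,
        RCLike.smul_re, RCLike.smul_re, hηη]
      simp [ha_def]
    rw [hXη] at hinner
    have : c * a + d ≤ L := by linarith
    have hcab : c * a + d = g b + c * (a - b) := by rw [hd]; ring
    have hab : a - b = -ε := by rw [hb]; ring
    rw [hcab, hab] at this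
    nlinarith
  -- take the limit ε → 0⁺
  have hcont : ContinuousWithinAt g (Set.Ici (0:ℝ)) a := hg_cont a ha0
  have haux : ∀ k : ℝ, 0 < k →
      Filter.Tendsto (fun ε : ℝ => g (a + k * ε)) (nhdsWithin 0 (Set.Ioi 0)) (nhds (g a)) := by
    intro k hk
    apply hcont.tendsto.comp
    rw [tendsto_nhdsWithin_iff]
    constructor
    · have : Filter.Tendsto (fun ε : ℝ => a + k * ε) (nhds 0) (nhds (a + k * 0)) := by
        exact (continuous_const.add (continuous_const.mul continuous_id)).tendsto 0
      simpa using this.mono_left nhdsWithin_le_nhds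
    · exact Filter.Eventually.mono self_mem_nhdsWithin fun ε hε => by
        have : (0:ℝ) < ε := hε
        simp only [Set.mem_Ici]
        nlinarith
  have htend : Filter.Tendsto (fun ε : ℝ => 2 * g (a + ε) - g (a + 2*ε))
      (nhdsWithin 0 (Set.Ioi 0)) (nhds (g a)) := by
    have h1 := haux 1 one_pos
    have h2 := haux 2 two_pos
    simp only [one_mul] at h1
    have h3 := (h1.const_mul 2).sub h2
    rw [show g a = 2 * g a - g a by ring]
    exact h3
  exact le_of_tendsto htend (Filter.Eventually.mono self_mem_nhdsWithin fun ε hε => key ε hε)
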